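/- For partitions λ and μ of n, μ and λ have the same p-core if and only if there exists a permutation σ of {1,...,n} such that λ_i - i ≡ μ_{σ(i)} - σ(i) (mod p) for all 1 ≤ i ≤ n (where partitions are padded with zeros to length n). -/

import Mathlib

/-- `f` is a partition with all (nonzero) parts among the first `n` rows:
a weakly decreasing function `ℕ → ℕ` (0-indexed rows) vanishing from index `n` on. -/
def IsPartWithin (n : ℕ) (f : ℕ → ℕ) : Prop :=
  (∀ i j, i ≤ j → f j ≤ f i) ∧ ∀ i, n ≤ i → f i = 0

/-- The size `|f|` of a partition `f` supported in the first `n` rows. -/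
def psize (n : ℕ) (f : ℕ → ℕ) : ℕ := ∑ i ∈ Finset.range n, f i

/-- The number of beads on runner `r` of James' abacus of the partition `f` with
`b = n` beads and `p` runners: beads occupy positions `f i - (i+1) + n` for
`0 ≤ i < n` (this is the β-sequence `λ_j - j + n`, `1 ≤ j ≤ n`).  The `p`-core of
`f` is obtained by sliding all beads as far up their runners as possible, so it is
determined exactly by these runner counts; in particular two partitions of `n`
have the same `p`-core if and only if all their runner counts agree. -/
def runnerCount (p n : ℕ) (f : ℕ → ℕ) (r : ZMod p) : ℕ :=
  ((Finset.range n).filter fun i => (((f i : ℤ) - (i + 1) + n : ℤ) : ZMod p) = r).card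

private lemma runnerCount_eq_sum (p n : ℕ) (f : ℕ → ℕ) (r : ZMod p) :
    runnerCount p n f r
      = ∑ i : Fin n,
          if (((f (i : ℕ) : ℤ) - ((i : ℕ) + 1) : ℤ) : ZMod p) = r - n then 1 else 0 := by
  rw [runnerCount, Finset.card_filter, ← Fin.sum_univ_eq_sum_range]
  refine Finset.sum_congr rfl fun i _ => ?_
  have : ((((f (i : ℕ) : ℤ) - ((i : ℕ) + 1) + n : ℤ) : ZMod p) = r)
      ↔ ((((f (i : ℕ) : ℤ) - ((i : ℕ) + 1) : ℤ) : ZMod p) = r - n) := by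
    push_cast
    rw [eq_sub_iff_add_eq]
  exact if_congr this rfl rfl

/-- partitions `λ, μ` of `n` have the same `p`-core iff there is a
permutation `σ` of `{1,…,n}` with `λ_i - i ≡ μ_{σ(i)} - σ(i) (mod p)` for all `i`. -/
theorem sameCore_iff_perm_congr (p n : ℕ) (hp : p.Prime)
    (f g : ℕ → ℕ) (hf : IsPartWithin n f) (hg : IsPartWithin n g)
    (hfn : psize n f = n) (hgn : psize n g = n) :
    (∀ r : ZMod p, runnerCount p n f r = runnerCount p n g r) ↔
      ∃ σ : Equiv.Perm (Fin n), ∀ i : Fin n,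
        (((f (i : ℕ) : ℤ) - ((i : ℕ) + 1) : ℤ) : ZMod p)
          = (((g ((σ i : Fin n) : ℕ) : ℤ) - (((σ i : Fin n) : ℕ) + 1) : ℤ) : ZMod p) := by
  classical
  set F : Fin n → ZMod p := fun i => (((f (i : ℕ) : ℤ) - ((i : ℕ) + 1) : ℤ) : ZMod p) with hF
  set G : Fin n → ZMod p := fun i => (((g (i : ℕ) : ℤ) - ((i : ℕ) + 1) : ℤ) : ZMod p) with hG
  constructor
  · intro h
    have hcard : ∀ c : ZMod p,
        Fintype.card {i : Fin n // F i = c} = Fintype.card {i : Fin n // G i = c} := by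
      intro c
      have hc := h (c + n)
      rw [runnerCount_eq_sum, runnerCount_eq_sum, add_sub_cancel_right] at hc
      rw [Fintype.card_subtype, Fintype.card_subtype, Finset.card_filter,
        Finset.card_filter]
      exact hc
    let e : ∀ c : ZMod p, {i : Fin n // F i = c} ≃ {i : Fin n // G i = c} :=
      fun c => Fintype.equivOfCardEq (hcard c)
    exact ⟨Equiv.ofFiberEquiv e, fun i => (Equiv.ofFiberEquiv_map e i).symm⟩
  · rintro ⟨σ, hσ⟩ r
    rw [runnerCount_eq_sum, runnerCount_eq_sum]
    calc (∑ i : Fin n, if F i = r - n then 1 else 0)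
        = ∑ i : Fin n, if G (σ i) = r - n then 1 else 0 := by
          refine Finset.sum_congr rfl fun i _ => ?_
          rw [show F i = G (σ i) from hσ i]
      _ = ∑ j : Fin n, if G j = r - n then 1 else 0 :=
          Equiv.sum_comp σ (fun j => if G j = r - n then 1 else 0)
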